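/- Let s be a multiset of positive natural numbers and let a, b be natural numbers with a ∈ s, b ∈ s.erase a and a ≥ b + 2. Let t be the multiset obtained from s by removing one copy each of a and b and adding one copy each of a − 1 and b + 1. Then the list of elements of t sorted in non-increasing order is strictly smaller, in the lexicographic order on lists of natural numbers, than the list of elements of s sorted in non-increasing order. -/

import Mathlib

private lemma key_lex (B : ℕ) : ∀ (x y : List ℕ), x.Pairwise (· ≥ ·) → y.Pairwise (· ≥ ·) →
    x.length = y.length → y.length < B →
    (x.map (B ^ ·)).sum < (y.map (B ^ ·)).sum → List.Lex (· < ·) x y := by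
  intro x
  induction x with
  | nil =>
    intro y _ _ hlen _ h
    cases y with
    | nil => simp at h
    | cons b y' => simp at hlen
  | cons a x' ih =>
    intro y hx hy hlen hB h
    cases y with
    | nil => simp at hlen
    | cons b y' =>
      rcases lt_trichotomy a b with hab | hab | hab
      · exact List.Lex.rel hab
      · subst hab
        apply List.Lex.cons
        apply ih y' hx.of_cons hy.of_cons (by simpa using hlen)
          (lt_of_le_of_lt (by simp) hB)
        simpa using h
      · exfalso
        have h1 : B ^ a ≤ (List.map (B ^ ·) (a :: x')).sum := by
          simp
        have h2 : ∀ z ∈ List.map (B ^ ·) y', z ≤ B ^ b := by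
          intro z hz
          simp only [List.mem_map] at hz
          obtain ⟨w, hw, rfl⟩ := hz
          exact Nat.pow_le_pow_right (by omega) (List.rel_of_pairwise_cons hy hw)
        have h3 : (List.map (B ^ ·) y').sum ≤ y'.length * B ^ b := by
          simpa [smul_eq_mul, List.length_map] using List.sum_le_card_nsmul _ _ h2
        have h4 : (List.map (B ^ ·) (b :: y')).sum ≤ (y'.length + 1) * B ^ b := by
          simp only [List.map_cons, List.sum_cons, add_mul, one_mul]
          omega
        have hBb : (y'.length + 1) * B ^ b < B ^ (b + 1) := by
          have : y'.length + 1 < B := by simpa using hB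
          have hpow : 0 < B ^ b := Nat.pow_pos (by omega)
          calc (y'.length + 1) * B ^ b < B * B ^ b := by
                exact Nat.mul_lt_mul_of_lt_of_le this (le_refl _) hpow
            _ = B ^ (b + 1) := by ring
        have h5 : B ^ (b + 1) ≤ B ^ a := Nat.pow_le_pow_right (by omega) (by omega)
        omega

theorem dstep_lex_decreasing (s : Multiset ℕ) (hpos : ∀ x ∈ s, 0 < x)
    (a b : ℕ) (ha : a ∈ s) (hb : b ∈ s.erase a) (hab : b + 2 ≤ a)
    (t : Multiset ℕ)
    (ht : t = (a - 1) ::ₘ (b + 1) ::ₘ ((s.erase a).erase b)) :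
    List.Lex (· < ·) (Multiset.sort t (· ≥ ·)) (Multiset.sort s (· ≥ ·)) := by
  set r := (s.erase a).erase b with hr
  have hs : s = a ::ₘ b ::ₘ r := by
    rw [hr, Multiset.cons_erase hb, Multiset.cons_erase ha]
  set B := Multiset.card s + 1 with hB
  have hcardt : Multiset.card t = Multiset.card s := by
    rw [ht, hs]; simp
  have hBge : 2 ≤ B := by
    rw [hB, hs]; simp
  -- sums
  have hsum : ((Multiset.sort t (· ≥ ·)).map (B ^ ·)).sum
      < ((Multiset.sort s (· ≥ ·)).map (B ^ ·)).sum := by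
    have e1 : ((Multiset.sort t (· ≥ ·)).map (B ^ ·)).sum = (t.map (B ^ ·)).sum := by
      rw [← Multiset.sum_coe, ← Multiset.map_coe, Multiset.sort_eq]
    have e2 : ((Multiset.sort s (· ≥ ·)).map (B ^ ·)).sum = (s.map (B ^ ·)).sum := by
      rw [← Multiset.sum_coe, ← Multiset.map_coe, Multiset.sort_eq]
    rw [e1, e2, ht, hs]
    simp only [Multiset.map_cons, Multiset.sum_cons]
    have key : B ^ (a - 1) + B ^ (b + 1) < B ^ a + B ^ b := by
      have h1 : B ^ (b + 1) ≤ B ^ (a - 1) := Nat.pow_le_pow_right (by omega) (by omega)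
      have h2 : B ^ (a - 1) + B ^ (a - 1) ≤ B ^ a := by
        calc B ^ (a - 1) + B ^ (a - 1) = 2 * B ^ (a - 1) := by ring
          _ ≤ B * B ^ (a - 1) := Nat.mul_le_mul_right _ hBge
          _ = B ^ (a - 1 + 1) := by ring
          _ = B ^ a := by congr 1; omega
      have h3 : 0 < B ^ b := Nat.pow_pos (by omega)
      omega
    omega
  apply key_lex B
  · exact Multiset.pairwise_sort ..
  · exact Multiset.pairwise_sort ..
  · simp [Multiset.length_sort, hcardt]
  · simp [Multiset.length_sort, hB]
  · exact hsum
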